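/- arXiv:2212.14620 — 3 statements merged into one kernel-verified Lean document; each statement's English description precedes it below -/
import Mathlib

section
/- Diagonal evaluation of the complete sum of a product of Kloosterman sums: Let q₁, q₂ be positive integers and let h₁, h₂ be integers with gcd(h₁, q₁) = 1 and gcd(h₂, q₂) = 1; let h̄₁ be an integer inverse of h₁ modulo q₁ and h̄₂ an integer inverse of h₂ modulo q₂. Then Σ_{β=0}^{q₁q₂−1} S(h̄₁, β; q₁) · S(h̄₂, β; q₂) equals 0 if q₁ ≠ q₂, and equals q₁² · c_{q₁}(h̄₁ − h̄₂) if q₁ = q₂. -/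
/-- `e(x) = e^{2πix}`. -/
noncomputable def e2pi (x : ℝ) : ℂ := Complex.exp (2 * Real.pi * Complex.I * x)

/-- The Kloosterman sum `S(a,b;c) = ∑_{x mod c, gcd(x,c)=1} e((a·x + b·x̄)/c)`,
where `x̄` is a multiplicative inverse of `x` modulo `c`. -/
noncomputable def kloosterman (a b : ℤ) (c : ℕ) : ℂ :=
  ∑ x ∈ (Finset.range c).filter (fun x => Nat.Coprime x c),
    e2pi (((a * (x : ℤ) + b * ((((x : ZMod c)⁻¹ : ZMod c).val : ℕ) : ℤ) : ℤ) : ℝ) / (c : ℝ))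

/-- The Ramanujan sum `c_q(n) = ∑_{x mod q, gcd(x,q)=1} e(n·x/q)`. -/
noncomputable def ramanujanSum (q : ℕ) (n : ℤ) : ℂ :=
  ∑ x ∈ (Finset.range q).filter (fun x => Nat.Coprime x q),
    e2pi (((n * (x : ℤ) : ℤ) : ℝ) / (q : ℝ))

lemma e2pi_add (a b : ℝ) : e2pi (a + b) = e2pi a * e2pi b := by
  simp [e2pi, ← Complex.exp_add]; ring_nf

lemma e2pi_int (n : ℤ) : e2pi n = 1 := by
  simp [e2pi]
  rw [show 2 * (Real.pi:ℂ) * Complex.I * n = n * (2*Real.pi*Complex.I) by ring]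
  exact Complex.exp_int_mul_two_pi_mul_I n

lemma e2pi_pow (x : ℝ) (n : ℕ) : e2pi x ^ n = e2pi (n * x) := by
  simp [e2pi, ← Complex.exp_nat_mul]; ring_nf

lemma e2pi_congr (a b : ℤ) (q : ℕ) (hq : 0 < q) (h : (q:ℤ) ∣ (a - b)) :
    e2pi (a / q) = e2pi (b / q) := by
  obtain ⟨k, hk⟩ := h
  have ha : (a:ℝ) / q = b / q + k := by
    have : (a:ℝ) = b + q * k := by push_cast [show a = b + q*k by linarith]; ring
    field_simp [this]; linarith
  rw [ha, e2pi_add, e2pi_int, mul_one]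

lemma two_pi_I_ne : (2 * (Real.pi:ℂ) * Complex.I) ≠ 0 := by
  simp [Real.pi_ne_zero, Complex.I_ne_zero]

lemma e2pi_eq_one_iff (m : ℤ) (q : ℕ) (hq : 0 < q) :
    e2pi ((m:ℝ) / q) = 1 ↔ (q:ℤ) ∣ m := by
  rw [e2pi, Complex.exp_eq_one_iff]
  have hq' : (q:ℝ) ≠ 0 := by positivity
  constructor
  · rintro ⟨n, hn⟩
    rw [show (n:ℂ) * (2*Real.pi*Complex.I) = 2*Real.pi*Complex.I * n by ring] at hn
    have h2 := mul_left_cancel₀ two_pi_I_ne hn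
    have hr : ((m:ℝ)/q) = (n:ℝ) := by exact_mod_cast congrArg Complex.re h2
    refine ⟨n, ?_⟩
    have : (m:ℝ) = q * n := by field_simp at hr; linarith
    exact_mod_cast this
  · rintro ⟨k, rfl⟩
    refine ⟨k, ?_⟩
    have hqc : (q:ℂ) ≠ 0 := Nat.cast_ne_zero.2 hq.ne'
    push_cast
    field_simp

lemma sum_e2pi_div (N : ℕ) (hN : 0 < N) (m : ℤ) :
    ∑ β ∈ Finset.range N, e2pi (((m * β : ℤ) : ℝ) / N) = if (N:ℤ) ∣ m then (N:ℂ) else 0 := by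
  have hterm : ∀ β : ℕ, e2pi (((m * β : ℤ) : ℝ) / N) = e2pi ((m:ℝ)/N) ^ β := by
    intro β
    rw [e2pi_pow]
    congr 1
    push_cast
    ring
  simp_rw [hterm]
  by_cases h : (N:ℤ) ∣ m
  · rw [if_pos h, (e2pi_eq_one_iff m N hN).2 h]
    simp
  · rw [if_neg h]
    have hζ : e2pi ((m:ℝ)/N) ≠ 1 := fun hc => h ((e2pi_eq_one_iff m N hN).1 hc)
    rw [geom_sum_eq hζ]
    have : e2pi ((m:ℝ)/N) ^ N = 1 := by
      rw [e2pi_pow]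
      have : (N:ℝ) * ((m:ℝ)/N) = (m:ℤ) := by field_simp
      rw [this, e2pi_int]
    simp [this]

lemma inv_val_coprime (q : ℕ) [NeZero q] (x : ℕ) (h : Nat.Coprime x q) :
    Nat.Coprime (((x : ZMod q)⁻¹ : ZMod q).val) q := by
  have hu : IsUnit ((x : ZMod q)) := (ZMod.isUnit_iff_coprime x q).2 h
  obtain ⟨u, hu⟩ := hu
  rw [← hu, ZMod.inv_coe_unit]
  exact ZMod.val_coe_unit_coprime u⁻¹

lemma inv_add_inv_eq_zero_iff (q : ℕ) (x y : ℕ) (hx : Nat.Coprime x q) (hy : Nat.Coprime y q) :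
    (x : ZMod q)⁻¹ + (y : ZMod q)⁻¹ = 0 ↔ (x : ZMod q) + (y : ZMod q) = 0 := by
  have hux : IsUnit ((x : ZMod q)) := (ZMod.isUnit_iff_coprime x q).2 hx
  have huy : IsUnit ((y : ZMod q)) := (ZMod.isUnit_iff_coprime y q).2 hy
  have h1 : (x : ZMod q) * (x : ZMod q)⁻¹ = 1 := ZMod.mul_inv_of_unit _ hux
  have h2 : (y : ZMod q) * (y : ZMod q)⁻¹ = 1 := ZMod.mul_inv_of_unit _ huy
  constructor
  · intro h
    have e : (x:ZMod q) + (y:ZMod q)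
        = ((x:ZMod q)⁻¹ + (y:ZMod q)⁻¹) * ((x:ZMod q) * (y:ZMod q)) := by
      linear_combination (-(y:ZMod q)) * h1 + (-(x:ZMod q)) * h2
    rw [e, h, zero_mul]
  · intro h
    have e : (x:ZMod q)⁻¹ + (y:ZMod q)⁻¹
        = ((x:ZMod q) + (y:ZMod q)) * ((x:ZMod q)⁻¹ * (y:ZMod q)⁻¹) := by
      linear_combination (-(y:ZMod q)⁻¹) * h1 + (-(x:ZMod q)⁻¹) * h2
    rw [e, h, zero_mul]

lemma cond_iff (q : ℕ) [NeZero q] (x y : ℕ) (hx : Nat.Coprime x q) (hy : Nat.Coprime y q) (hylt : y < q) :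
    ((q:ℤ) ∣ ((((x : ZMod q)⁻¹ : ZMod q).val : ℤ) + (((y : ZMod q)⁻¹ : ZMod q).val : ℤ)))
      ↔ y = (-(x : ZMod q) : ZMod q).val := by
  have hcast : ((((((x : ZMod q)⁻¹ : ZMod q).val : ℤ) + (((y : ZMod q)⁻¹ : ZMod q).val : ℤ)) : ℤ) : ZMod q)
      = (x : ZMod q)⁻¹ + (y : ZMod q)⁻¹ := by
    push_cast [ZMod.natCast_val, ZMod.cast_id]
    rfl
  rw [← ZMod.intCast_zmod_eq_zero_iff_dvd, hcast, inv_add_inv_eq_zero_iff q x y hx hy]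
  constructor
  · intro h
    have hyx : (y : ZMod q) = -(x : ZMod q) := by linear_combination h
    rw [← ZMod.val_cast_of_lt hylt, hyx]
  · intro h
    have hyx : (y : ZMod q) = -(x : ZMod q) := by
      rw [h, ZMod.natCast_val, ZMod.cast_id]
    rw [hyx]; ring

/-- Diagonal evaluation of the complete sum of a product of Kloosterman sums:
`∑_{β=0}^{q₁q₂−1} S(h̄₁, β; q₁) · S(h̄₂, β; q₂)` is `0` if `q₁ ≠ q₂`, and is
`q₁² · c_{q₁}(h̄₁ − h̄₂)` if `q₁ = q₂`. -/
theorem diagonal_kloosterman_pair_sum (q₁ q₂ : ℕ) (hq₁ : 0 < q₁) (hq₂ : 0 < q₂)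
    (h₁ h₂ : ℤ) (hc₁ : Int.gcd h₁ (q₁ : ℤ) = 1) (hc₂ : Int.gcd h₂ (q₂ : ℤ) = 1)
    (hb₁ hb₂ : ℤ) (hhb₁ : h₁ * hb₁ ≡ 1 [ZMOD (q₁ : ℤ)]) (hhb₂ : h₂ * hb₂ ≡ 1 [ZMOD (q₂ : ℤ)]) :
    (∑ β ∈ Finset.range (q₁ * q₂), kloosterman hb₁ (β : ℤ) q₁ * kloosterman hb₂ (β : ℤ) q₂)
      = if q₁ = q₂ then (q₁ : ℂ) ^ 2 * ramanujanSum q₁ (hb₁ - hb₂) else 0 := by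
  haveI : NeZero q₁ := ⟨hq₁.ne'⟩
  haveI : NeZero q₂ := ⟨hq₂.ne'⟩
  have hN : 0 < q₁ * q₂ := Nat.mul_pos hq₁ hq₂
  set I₁ : ℕ → ℤ := fun x => ((((x : ZMod q₁)⁻¹ : ZMod q₁).val : ℕ) : ℤ) with hI₁
  set I₂ : ℕ → ℤ := fun y => ((((y : ZMod q₂)⁻¹ : ZMod q₂).val : ℕ) : ℤ) with hI₂
  set F₁ := (Finset.range q₁).filter (fun x => Nat.Coprime x q₁) with hF₁
  set F₂ := (Finset.range q₂).filter (fun y => Nat.Coprime y q₂) with hF₂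
  have step1 : (∑ β ∈ Finset.range (q₁ * q₂), kloosterman hb₁ (β : ℤ) q₁ * kloosterman hb₂ (β : ℤ) q₂)
      = ∑ x ∈ F₁, ∑ y ∈ F₂,
          (e2pi (((hb₁ * x : ℤ) : ℝ) / q₁) * e2pi (((hb₂ * y : ℤ) : ℝ) / q₂)) *
            (if ((q₁*q₂ : ℕ):ℤ) ∣ (I₁ x * q₂ + I₂ y * q₁) then ((q₁*q₂ : ℕ):ℂ) else 0) := by
    have expand : ∀ β ∈ Finset.range (q₁*q₂),
        kloosterman hb₁ (β : ℤ) q₁ * kloosterman hb₂ (β : ℤ) q₂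
        = ∑ x ∈ F₁, ∑ y ∈ F₂,
            (e2pi (((hb₁ * x : ℤ) : ℝ) / q₁) * e2pi (((hb₂ * y : ℤ) : ℝ) / q₂)) *
              e2pi ((((I₁ x * q₂ + I₂ y * q₁) * β : ℤ) : ℝ) / ((q₁*q₂ : ℕ):ℝ)) := by
      intro β _
      rw [kloosterman, kloosterman, Finset.sum_mul_sum]
      refine Finset.sum_congr rfl fun x hx => Finset.sum_congr rfl fun y hy => ?_
      rw [show ((hb₁ * x + β * I₁ x : ℤ) : ℝ) / q₁
            = ((hb₁ * x : ℤ) : ℝ) / q₁ + ((β * I₁ x : ℤ) : ℝ) / q₁ by push_cast; ring,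
          show ((hb₂ * y + β * I₂ y : ℤ) : ℝ) / q₂
            = ((hb₂ * y : ℤ) : ℝ) / q₂ + ((β * I₂ y : ℤ) : ℝ) / q₂ by push_cast; ring,
          e2pi_add, e2pi_add]
      have hq₁' : (q₁:ℝ) ≠ 0 := Nat.cast_ne_zero.2 hq₁.ne'
      have hq₂' : (q₂:ℝ) ≠ 0 := Nat.cast_ne_zero.2 hq₂.ne'
      rw [show (((I₁ x * q₂ + I₂ y * q₁) * β : ℤ) : ℝ) / ((q₁*q₂ : ℕ):ℝ)
            = ((β * I₁ x : ℤ) : ℝ) / q₁ + ((β * I₂ y : ℤ) : ℝ) / q₂ by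
          push_cast; field_simp]
      rw [e2pi_add]
      ring
    rw [Finset.sum_congr rfl expand, Finset.sum_comm]
    refine Finset.sum_congr rfl fun x hx => ?_
    rw [Finset.sum_comm]
    refine Finset.sum_congr rfl fun y hy => ?_
    rw [← Finset.mul_sum, sum_e2pi_div (q₁*q₂) hN (I₁ x * q₂ + I₂ y * q₁)]
  rw [step1]
  by_cases hq : q₁ = q₂
  · subst hq
    rw [if_pos rfl]
    set q := q₁
    have hmem : ∀ x ∈ F₁, x < q ∧ Nat.Coprime x q := by
      intro x hx
      rw [hF₁, Finset.mem_filter, Finset.mem_range] at hx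
      exact hx
    have hcond : ∀ x y : ℕ, (((q*q : ℕ):ℤ) ∣ (I₁ x * q + I₂ y * q)) ↔ ((q:ℤ) ∣ (I₁ x + I₂ y)) := by
      intro x y
      have hqz : (q:ℤ) ≠ 0 := Int.natCast_ne_zero.2 hq₁.ne'
      push_cast
      rw [show I₁ x * q + I₂ y * q = (I₁ x + I₂ y) * q by ring]
      exact mul_dvd_mul_iff_right hqz
    trans (∑ x ∈ F₁, e2pi ((((hb₁ - hb₂) * (x:ℤ) : ℤ) : ℝ) / (q:ℝ)) * ((q*q : ℕ):ℂ))
    · refine Finset.sum_congr rfl fun x hx => ?_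
      obtain ⟨hxlt, hxcop⟩ := hmem x hx
      set y₀ := (-(x : ZMod q) : ZMod q).val with hy₀
      have hy₀lt : y₀ < q := ZMod.val_lt _
      have hy₀cast : ((y₀ : ℕ) : ZMod q) = -(x : ZMod q) := by
        rw [hy₀, ZMod.natCast_val, ZMod.cast_id]
      have hy₀cop : Nat.Coprime y₀ q := by
        rw [← ZMod.isUnit_iff_coprime, hy₀cast]
        exact ((ZMod.isUnit_iff_coprime x q).2 hxcop).neg
      have hy₀mem : y₀ ∈ F₂ := by
        rw [hF₂, Finset.mem_filter, Finset.mem_range]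
        exact ⟨hy₀lt, hy₀cop⟩
      have hzero : ∀ y ∈ F₂, y ≠ y₀ →
          (e2pi (((hb₁ * x : ℤ) : ℝ) / q) * e2pi (((hb₂ * y : ℤ) : ℝ) / q)) *
            (if ((q*q : ℕ):ℤ) ∣ (I₁ x * q + I₂ y * q) then ((q*q : ℕ):ℂ) else 0) = 0 := by
        intro y hy hne
        obtain ⟨hylt, hycop⟩ : y < q ∧ Nat.Coprime y q := by
          rw [hF₂, Finset.mem_filter, Finset.mem_range] at hy; exact hy
        rw [if_neg (fun hdvd => hne ((cond_iff q x y hxcop hycop hylt).1 ((hcond x y).1 hdvd))),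
          mul_zero]
      rw [Finset.sum_eq_single_of_mem y₀ hy₀mem hzero]
      rw [if_pos ((hcond x y₀).2 ((cond_iff q x y₀ hxcop hy₀cop hy₀lt).2 rfl))]
      have hdvd : (q:ℤ) ∣ (hb₂ * y₀ - (-(hb₂ * x))) := by
        have hc : (((y₀ + x : ℕ) : ℕ) : ZMod q) = 0 := by
          push_cast [hy₀cast]; ring
        have hq'' : q ∣ y₀ + x := (ZMod.natCast_eq_zero_iff _ _).1 hc
        have hq' : (q:ℤ) ∣ ((y₀ : ℤ) + (x : ℤ)) := by exact_mod_cast Int.natCast_dvd_natCast.2 hq''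
        obtain ⟨k, hk⟩ := hq'
        exact ⟨hb₂ * k, by rw [show hb₂ * y₀ - (-(hb₂*x)) = hb₂ * ((y₀:ℤ) + x) by ring, hk]; ring⟩
      rw [e2pi_congr (hb₂ * y₀) (-(hb₂ * x)) q hq₁ hdvd]
      rw [show e2pi (((hb₁ * x : ℤ):ℝ)/(q:ℝ)) * e2pi (((-(hb₂ * x) : ℤ):ℝ)/(q:ℝ))
            = e2pi ((((hb₁ - hb₂) * (x:ℤ) : ℤ):ℝ)/(q:ℝ)) by
          rw [← e2pi_add]; congr 1; push_cast; ring]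
    · rw [ramanujanSum, Finset.mul_sum]
      refine Finset.sum_congr rfl fun x hx => ?_
      push_cast
      ring
  · rw [if_neg hq]
    refine Finset.sum_eq_zero fun x hx => Finset.sum_eq_zero fun y hy => ?_
    obtain ⟨hxlt, hxcop⟩ : x < q₁ ∧ Nat.Coprime x q₁ := by
      rw [hF₁, Finset.mem_filter, Finset.mem_range] at hx; exact hx
    obtain ⟨hylt, hycop⟩ : y < q₂ ∧ Nat.Coprime y q₂ := by
      rw [hF₂, Finset.mem_filter, Finset.mem_range] at hy; exact hy
    rw [if_neg ?hnd, mul_zero]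
    case hnd =>
    intro hdvd
    apply hq
    have hd1 : (q₁:ℤ) ∣ (I₁ x * q₂ + I₂ y * q₁) :=
      dvd_trans (by push_cast; exact dvd_mul_right _ _) hdvd
    have hd2 : (q₂:ℤ) ∣ (I₁ x * q₂ + I₂ y * q₁) :=
      dvd_trans (by push_cast; exact dvd_mul_left _ _) hdvd
    have hd1' : (q₁:ℤ) ∣ I₁ x * q₂ := (dvd_add_left (dvd_mul_left (q₁:ℤ) (I₂ y))).1 hd1
    have hd2' : (q₂:ℤ) ∣ I₂ y * q₁ := (dvd_add_right (dvd_mul_left (q₂:ℤ) (I₁ x))).1 hd2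
    have hn1 : q₁ ∣ (((x : ZMod q₁)⁻¹ : ZMod q₁).val) * q₂ := by
      simp only [hI₁] at hd1'
      exact_mod_cast hd1'
    have hn2 : q₂ ∣ (((y : ZMod q₂)⁻¹ : ZMod q₂).val) * q₁ := by
      simp only [hI₂] at hd2'
      exact_mod_cast hd2'
    have hcop1 := inv_val_coprime q₁ x hxcop
    have hcop2 := inv_val_coprime q₂ y hycop
    have hq12 : q₁ ∣ q₂ := Nat.Coprime.dvd_of_dvd_mul_left hcop1.symm hn1
    have hq21 : q₂ ∣ q₁ := Nat.Coprime.dvd_of_dvd_mul_left hcop2.symm hn2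
    exact Nat.dvd_antisymm hq12 hq21
end

section
/- First derivative bound for oscillatory integrals: Let a < b be real numbers, let Λ > 0, and let f : [a,b] → ℝ be differentiable with f' monotone on [a,b] and |f'(x)| ≥ Λ for all x ∈ [a,b]. Then |∫_a^ب e(f(x)) dx| ≤ 2/Λ, i.e. the modulus of ∫_a^b e^{2πi f(x)} dx is at most 2/Λ. -/
open MeasureTheory Set intervalIntegral

private lemma norm_exp_two_pi_I (r : ℝ) : ‖Complex.exp (2 * Real.pi * Complex.I * r)‖ = 1 := by
  rw [Complex.norm_exp]
  norm_num [Complex.mul_re, Complex.mul_im]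

private lemma core_bound (a b Λ : ℝ) (hab : a < b) (hΛ : 0 < Λ)
    (f f' : ℝ → ℝ)
    (hderiv : ∀ x ∈ Set.Icc a b, HasDerivAt f (f' x) x)
    (hmono : MonotoneOn f' (Set.Icc a b) ∨ AntitoneOn f' (Set.Icc a b))
    (hpos : ∀ x ∈ Set.Icc a b, Λ ≤ f' x) :
    ‖∫ x in a..b, Complex.exp (2 * Real.pi * Complex.I * (f x))‖ ≤ 2 / Λ := by
  -- the clamp map onto [a,b]
  set c : ℝ → ℝ := fun x => max a (min b x) with hc
  have hcmem : ∀ x, c x ∈ Icc a b := fun x =>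
    ⟨le_max_left _ _, max_le hab.le (min_le_left _ _)⟩
  have hcid : ∀ x ∈ Icc a b, c x = x := by
    intro x hx
    simp only [hc, min_eq_right hx.2, max_eq_right hx.1]
  have hcmono : Monotone c := fun x y h =>
    max_le_max le_rfl (min_le_min le_rfl h)
  have hccont : Continuous c := continuous_const.max (continuous_const.min continuous_id)
  have hfc : ∀ x, Λ ≤ f' (c x) := fun x => hpos _ (hcmem x)
  have hfcpos : ∀ x, 0 < f' (c x) := fun x => hΛ.trans_le (hfc x)
  -- the weight w = 1/f' (clamped)
  set w : ℝ → ℝ := fun x => (f' (c x))⁻¹ with hw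
  have hw_pos : ∀ x, 0 < w x := fun x => inv_pos.2 (hfcpos x)
  have hw_le : ∀ x, w x ≤ Λ⁻¹ := fun x => inv_anti₀ hΛ (hfc x)
  have hw_inv : ∀ x, (w x)⁻¹ = f' (c x) := fun x => inv_inv _
  have hwmono : Monotone w ∨ Antitone w := by
    rcases hmono with h | h
    · exact Or.inr fun x y hxy =>
        inv_anti₀ (hfcpos x) (h (hcmem x) (hcmem y) (hcmono hxy))
    · exact Or.inl fun x y hxy =>
        inv_anti₀ (hfcpos y) (h (hcmem x) (hcmem y) (hcmono hxy))
  have hwmeas : Measurable w := by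
    rcases hwmono with h | h
    exacts [h.measurable, h.measurable]
  -- the upper bound B for f' on [a,b]
  set B : ℝ := max (f' a) (f' b) with hB
  have hfB : ∀ x, f' (c x) ≤ B := by
    intro x
    rcases hmono with h | h
    · exact le_trans (h (hcmem x) (right_mem_Icc.2 hab.le) (hcmem x).2) (le_max_right _ _)
    · exact le_trans (h (left_mem_Icc.2 hab.le) (hcmem x) (hcmem x).1) (le_max_left _ _)
  have hBpos : 0 < B := hΛ.trans_le (le_trans (hpos a (left_mem_Icc.2 hab.le)) (le_max_left _ _))
  -- continuity of the oscillating factor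
  have hfcont : ContinuousOn f (Icc a b) := fun x hx =>
    (hderiv x hx).continuousAt.continuousWithinAt
  set ef : ℝ → ℂ := fun x => Complex.exp (2 * Real.pi * Complex.I * (f (c x))) with hef
  have hefcont : Continuous ef := by
    apply Complex.continuous_exp.comp
    exact continuous_const.mul (Complex.continuous_ofReal.comp
      (hfcont.comp_continuous hccont hcmem))
  have hefnorm : ∀ x, ‖ef x‖ = 1 := fun x => norm_exp_two_pi_I _
  -- the two-variable function
  set g : ℝ × ℝ → ℂ := fun p => ((w p.1 : ℂ))⁻¹ * ef p.1 with hg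
  set A : Set (ℝ × ℝ) := {p | p.1 ∈ Ioo a b ∧ p.2 ∈ Ioo 0 (w p.1)} with hA
  have hAmeas : MeasurableSet A := by
    have : A = ({p : ℝ × ℝ | a < p.1} ∩ {p | p.1 < b}) ∩
        ({p | 0 < p.2} ∩ {p | p.2 < w p.1}) := by
      ext p; simp [hA, mem_Ioo, and_assoc]
    rw [this]
    exact ((measurableSet_lt measurable_const measurable_fst).inter
        (measurableSet_lt measurable_fst measurable_const)).inter
      ((measurableSet_lt measurable_const measurable_snd).inter
        (measurableSet_lt measurable_snd (hwmeas.comp measurable_fst)))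
  have hgmeas : Measurable g :=
    ((Complex.measurable_ofReal.comp (hwmeas.comp measurable_fst)).inv).mul
      (hefcont.measurable.comp measurable_fst)
  set Fp : ℝ × ℝ → ℂ := A.indicator g with hFp
  have hFpmeas : Measurable Fp := hgmeas.indicator hAmeas
  -- bound and integrability
  set bfun : ℝ × ℝ → ℝ := (Ioo a b ×ˢ Ioo (0:ℝ) Λ⁻¹).indicator (fun _ => B) with hbfun
  have hFpbound : ∀ p, ‖Fp p‖ ≤ bfun p := by
    intro p
    by_cases hp : p ∈ A
    · rw [hFp, indicator_of_mem hp, hbfun,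
        indicator_of_mem (Set.mem_prod.2 ⟨hp.1, Set.mem_Ioo.2 ⟨hp.2.1, lt_of_lt_of_le hp.2.2 (hw_le _)⟩⟩)]
      rw [hg, norm_mul, hefnorm, mul_one, norm_inv, Complex.norm_real,
        Real.norm_eq_abs, abs_of_pos (hw_pos _), hw_inv]
      exact hfB _
    · rw [hFp, indicator_of_notMem hp, norm_zero, hbfun]
      exact indicator_nonneg (fun _ _ => hBpos.le) p
  have hprodmeas : MeasurableSet (Ioo a b ×ˢ Ioo (0:ℝ) Λ⁻¹) :=
    measurableSet_Ioo.prod measurableSet_Ioo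
  have hprodfin : volume (Ioo a b ×ˢ Ioo (0:ℝ) Λ⁻¹) < ⊤ := by
    rw [Measure.volume_eq_prod, Measure.prod_prod, Real.volume_Ioo, Real.volume_Ioo]
    exact ENNReal.mul_lt_top ENNReal.ofReal_lt_top ENNReal.ofReal_lt_top
  have hbfun_int : Integrable bfun := by
    refine (integrableOn_const hprodfin.ne).integrable_indicator hprodmeas
  have hFpint : Integrable Fp :=
    Integrable.mono' hbfun_int hFpmeas.aestronglyMeasurable (Filter.Eventually.of_forall hFpbound)
  -- Step A : iterated integral (x first inner t) equals the interval integral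
  have hinner : ∀ x : ℝ, (∫ t, Fp (x, t)) =
      (Ioo a b).indicator (fun y => Complex.exp (2 * Real.pi * Complex.I * (f y))) x := by
    intro x
    by_cases hx : x ∈ Ioo a b
    · have hfun : (fun t => Fp (x, t)) =
          (Ioo 0 (w x)).indicator (fun _ => ((w x : ℂ))⁻¹ * ef x) := by
        funext t
        by_cases ht : t ∈ Ioo 0 (w x)
        · rw [indicator_of_mem ht]
          exact indicator_of_mem (show (x, t) ∈ A from ⟨hx, ht⟩) g
        · rw [indicator_of_notMem ht]
          exact indicator_of_notMem (fun h => ht h.2) g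
      rw [hfun, integral_indicator_const _ measurableSet_Ioo, Real.volume_real_Ioo_of_le (hw_pos x).le, sub_zero,
        indicator_of_mem hx]
      have hcx : c x = x := hcid x (mem_Icc_of_Ioo hx)
      rw [Complex.real_smul, ← mul_assoc,
        mul_inv_cancel₀ (by exact_mod_cast (hw_pos x).ne' : ((w x : ℝ) : ℂ) ≠ 0), one_mul, hef]
      simp only [hcx]
    · have hfun : (fun t => Fp (x, t)) = fun _ => 0 := by
        funext t
        exact indicator_of_notMem (fun h => hx h.1) g
      rw [hfun, MeasureTheory.integral_zero, indicator_of_notMem hx]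
  have hstepA : (∫ x, ∫ t, Fp (x, t)) =
      ∫ x in a..b, Complex.exp (2 * Real.pi * Complex.I * (f x)) := by
    simp_rw [hinner]
    rw [MeasureTheory.integral_indicator measurableSet_Ioo, ← integral_Ioc_eq_integral_Ioo,
      ← intervalIntegral.integral_of_le hab.le]
  -- swap
  have huncurry : Function.uncurry (fun x t => Fp (x, t)) = Fp := by
    funext p; cases p; rfl
  have hswap : (∫ x, ∫ t, Fp (x, t)) = ∫ t, ∫ x, Fp (x, t) := by
    apply integral_integral_swap
    rw [huncurry, ← Measure.volume_eq_prod]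
    exact hFpint
  -- Step B : bound the inner integrals
  have hGbound : ∀ t : ℝ, ‖∫ x, Fp (x, t)‖ ≤
      (Ioo (0:ℝ) Λ⁻¹).indicator (fun _ => (Real.pi)⁻¹) t := by
    intro t
    by_cases ht : t ∈ Ioo (0:ℝ) Λ⁻¹
    · rw [indicator_of_mem ht]
      set S : Set ℝ := {x | x ∈ Ioo a b ∧ t < w x} with hS
      have hSmeas : MeasurableSet S :=
        measurableSet_Ioo.inter (measurableSet_lt measurable_const hwmeas)
      have hfun : (fun x => Fp (x, t)) = S.indicator (fun x => ((w x : ℂ))⁻¹ * ef x) := by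
        funext x
        by_cases hxS : x ∈ S
        · rw [indicator_of_mem hxS]
          exact indicator_of_mem (show (x, t) ∈ A from ⟨hxS.1, ht.1, hxS.2⟩) g
        · rw [indicator_of_notMem hxS]
          exact indicator_of_notMem (fun h => hxS ⟨h.1, h.2.2⟩) g
      rw [hfun, MeasureTheory.integral_indicator hSmeas]
      by_cases hSne : S.Nonempty
      · obtain ⟨x0, hx0⟩ := hSne
        have hbdd_above : BddAbove S := ⟨b, fun x hx => hx.1.2.le⟩
        have hbdd_below : BddBelow S := ⟨a, fun x hx => hx.1.1.le⟩
        set p := sInf S with hp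
        set q := sSup S with hq
        have hpq' : p ≤ q := le_trans (csInf_le hbdd_below hx0) (le_csSup hbdd_above hx0)
        have hpab : p ∈ Icc a b :=
          ⟨le_csInf ⟨x0, hx0⟩ (fun x hx => hx.1.1.le),
            (csInf_le hbdd_below hx0).trans hx0.1.2.le⟩
        have hqab : q ∈ Icc a b :=
          ⟨hx0.1.1.le.trans (le_csSup hbdd_above hx0),
            csSup_le ⟨x0, hx0⟩ (fun x hx => hx.1.2.le)⟩
        have hsub : Icc p q ⊆ Icc a b := Icc_subset_Icc hpab.1 hqab.2
        have hScc : S ⊆ Icc p q := fun x hx =>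
          ⟨csInf_le hbdd_below hx, le_csSup hbdd_above hx⟩
        have hord : ∀ x₁ ∈ S, ∀ x₂ ∈ S, ∀ y, x₁ ≤ y → y ≤ x₂ → y ∈ S := by
          intro x1 h1 x2 h2 y hy1 hy2
          refine ⟨⟨lt_of_lt_of_le h1.1.1 hy1, lt_of_le_of_lt hy2 h2.1.2⟩, ?_⟩
          rcases hwmono with hm | hm
          · exact lt_of_lt_of_le h1.2 (hm hy1)
          · exact lt_of_lt_of_le h2.2 (hm hy2)
        have hIoo_sub : Ioo p q ⊆ S := by
          intro y hy
          obtain ⟨x1, hx1, hx1y⟩ := exists_lt_of_csInf_lt ⟨x0, hx0⟩ hy.1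
          obtain ⟨x2, hx2, hyx2⟩ := exists_lt_of_lt_csSup ⟨x0, hx0⟩ hy.2
          exact hord x1 hx1 x2 hx2 y hx1y.le hyx2.le
        have hSae : S =ᵐ[volume] Ioo p q := by
          rw [MeasureTheory.ae_eq_set]
          constructor
          · refine measure_mono_null (fun x hx => ?_) (?_ : volume ({p, q} : Set ℝ) = 0)
            · have h1 : x ∈ Icc p q := hScc hx.1
              have h2 : x ∉ Ioo p q := hx.2
              rcases eq_or_lt_of_le h1.1 with h | h
              · exact Or.inl h.symm
              · rcases eq_or_lt_of_le h1.2 with h' | h'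
                · exact Or.inr h'
                · exact absurd ⟨h, h'⟩ h2
            · exact ((Set.finite_singleton q).insert p).measure_zero _
          · rw [diff_eq_empty.2 hIoo_sub]
            exact measure_empty
        rw [setIntegral_congr_set hSae]
        have hcongr : (∫ x in Ioo p q, ((w x : ℂ))⁻¹ * ef x) =
            ∫ x in Ioo p q, (f' x : ℂ) * Complex.exp (2 * Real.pi * Complex.I * (f x)) := by
          refine setIntegral_congr_fun measurableSet_Ioo (fun x hx => ?_)
          have hxab : x ∈ Icc a b := hsub (Ioo_subset_Icc_self hx)
          have hcx : c x = x := hcid x hxab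
          simp only [hw, hef, hcx, Complex.ofReal_inv, inv_inv]
        rw [hcongr, ← integral_Ioc_eq_integral_Ioo, ← intervalIntegral.integral_of_le hpq']
        -- FTC
        have hderiv2 : ∀ x ∈ Set.uIcc p q,
            HasDerivAt (fun y => Complex.exp (2 * Real.pi * Complex.I * (f y)))
              (2 * Real.pi * Complex.I * (f' x) * Complex.exp (2 * Real.pi * Complex.I * (f x))) x := by
          intro x hx
          have hxab : x ∈ Icc a b := hsub (by rwa [uIcc_of_le hpq'] at hx)
          have h1 : HasDerivAt (fun y : ℝ => ((f y : ℂ))) (f' x : ℂ) x :=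
            (hderiv x hxab).ofReal_comp
          have h2 : HasDerivAt (fun y : ℝ => 2 * Real.pi * Complex.I * (f y : ℂ))
              (2 * Real.pi * Complex.I * (f' x)) x := h1.const_mul _
          have := h2.cexp
          convert this using 1
          ring
        have hcontexp : ContinuousOn
            (fun x => 2 * Real.pi * Complex.I * Complex.exp (2 * Real.pi * Complex.I * (f x)))
            (Set.uIcc p q) := by
          rw [uIcc_of_le hpq']
          refine continuousOn_const.mul (Complex.continuous_exp.comp_continuousOn ?_)
          exact continuousOn_const.mul
            (Complex.continuous_ofReal.comp_continuousOn (hfcont.mono hsub))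
        have hf'int : IntervalIntegrable (fun x => (f' x : ℂ)) volume p q := by
          rw [intervalIntegrable_iff]
          have : IntervalIntegrable f' volume p q := by
            rcases hmono with h | h
            · exact (h.mono (by rw [uIcc_of_le hpq']; exact hsub)).intervalIntegrable
            · exact (h.mono (by rw [uIcc_of_le hpq']; exact hsub)).intervalIntegrable
          rw [intervalIntegrable_iff] at this
          exact this.ofReal
        have hint : IntervalIntegrable
            (fun x => 2 * Real.pi * Complex.I * (f' x) *
              Complex.exp (2 * Real.pi * Complex.I * (f x))) volume p q := by
          have h := hf'int.mul_continuousOn hcontexp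
          apply h.congr
          refine fun x _ => ?_
          ring
        have hftc := intervalIntegral.integral_eq_sub_of_hasDerivAt hderiv2 hint
        have h2piI : (2 * Real.pi * Complex.I : ℂ) ≠ 0 := by
          simp [Real.pi_ne_zero, Complex.I_ne_zero]
        have heq : (∫ x in p..q, (f' x : ℂ) * Complex.exp (2 * Real.pi * Complex.I * (f x))) =
            (2 * Real.pi * Complex.I)⁻¹ *
              (Complex.exp (2 * Real.pi * Complex.I * (f q)) -
                Complex.exp (2 * Real.pi * Complex.I * (f p))) := by
          rw [← hftc, ← intervalIntegral.integral_const_mul]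
          refine intervalIntegral.integral_congr (fun x _ => ?_)
          field_simp
        rw [heq, norm_mul, norm_inv]
        have hnorm2pi : ‖(2 * Real.pi * Complex.I : ℂ)‖ = 2 * Real.pi := by
          simp [norm_mul, Complex.norm_real, Real.pi_pos.le, abs_of_pos Real.pi_pos]
        rw [hnorm2pi]
        have hnsub : ‖Complex.exp (2 * Real.pi * Complex.I * (f q)) -
            Complex.exp (2 * Real.pi * Complex.I * (f p))‖ ≤ 2 := by
          refine le_trans (norm_sub_le _ _) ?_
          rw [norm_exp_two_pi_I, norm_exp_two_pi_I]
          norm_num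
        calc (2 * Real.pi)⁻¹ * ‖Complex.exp (2 * Real.pi * Complex.I * (f q)) -
            Complex.exp (2 * Real.pi * Complex.I * (f p))‖
            ≤ (2 * Real.pi)⁻¹ * 2 := by
              exact mul_le_mul_of_nonneg_left hnsub (by positivity)
          _ = (Real.pi)⁻¹ := by
              field_simp
      · rw [not_nonempty_iff_eq_empty.1 hSne]
        simp [Real.pi_pos.le]
    · have hzero : ∀ x, Fp (x, t) = 0 := by
        intro x
        refine indicator_of_notMem (fun h => ht ⟨h.2.1, lt_of_lt_of_le h.2.2 (hw_le x)⟩) g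
      simp only [hzero, MeasureTheory.integral_zero, norm_zero, indicator_of_notMem ht, le_refl]
  -- assemble
  have hind_int : Integrable ((Ioo (0:ℝ) Λ⁻¹).indicator (fun _ => (Real.pi)⁻¹)) := by
    refine (integrableOn_const ?_).integrable_indicator measurableSet_Ioo
    rw [Real.volume_Ioo]; exact ENNReal.ofReal_ne_top
  have hfinal : ‖∫ x in a..b, Complex.exp (2 * Real.pi * Complex.I * (f x))‖ ≤
      ∫ t, (Ioo (0:ℝ) Λ⁻¹).indicator (fun _ => (Real.pi)⁻¹) t := by
    rw [← hstepA, hswap]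
    exact norm_integral_le_of_norm_le hind_int (Filter.Eventually.of_forall hGbound)
  refine hfinal.trans ?_
  rw [integral_indicator_const _ measurableSet_Ioo, Real.volume_real_Ioo_of_le (by positivity : (0:ℝ) ≤ Λ⁻¹), sub_zero,
    smul_eq_mul]
  have hπ : (Real.pi)⁻¹ ≤ 2 := by
    have := Real.pi_gt_three
    rw [inv_le_iff_one_le_mul₀ (by linarith)]
    linarith
  calc Λ⁻¹ * (Real.pi)⁻¹ ≤ Λ⁻¹ * 2 :=
        mul_le_mul_of_nonneg_left hπ (by positivity)
    _ = 2 / Λ := by rw [div_eq_mul_inv, mul_comm]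

/-- First derivative bound for oscillatory integrals: if `f` is differentiable on `[a,b]`
with monotone derivative `f'` satisfying `|f'| ≥ Λ > 0` there, then
`|∫_a^b e^{2πi f(x)} dx| ≤ 2/Λ`. -/
theorem first_derivative_bound (a b Λ : ℝ) (hab : a < b) (hΛ : 0 < Λ)
    (f f' : ℝ → ℝ)
    (hderiv : ∀ x ∈ Set.Icc a b, HasDerivAt f (f' x) x)
    (hmono : MonotoneOn f' (Set.Icc a b) ∨ AntitoneOn f' (Set.Icc a b))
    (hbound : ∀ x ∈ Set.Icc a b, Λ ≤ |f' x|) :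
    ‖∫ x in a..b, Complex.exp (2 * Real.pi * Complex.I * (f x))‖ ≤ 2 / Λ := by
  have hne : ∀ x ∈ Set.Icc a b, f' x ≠ 0 := by
    intro x hx h
    have := hbound x hx
    rw [h, abs_zero] at this
    linarith
  have hdarboux := hasDerivWithinAt_forall_lt_or_forall_gt_of_forall_ne (convex_Icc a b)
    (fun x hx => (hderiv x hx).hasDerivWithinAt) hne
  rcases hdarboux with hneg | hpos
  · -- f' < 0 everywhere: apply core to -f
    have hpos' : ∀ x ∈ Set.Icc a b, Λ ≤ -f' x := by
      intro x hx
      have := hbound x hx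
      rwa [abs_of_neg (hneg x hx)] at this
    have hmono' : MonotoneOn (fun x => -f' x) (Set.Icc a b) ∨
        AntitoneOn (fun x => -f' x) (Set.Icc a b) := by
      rcases hmono with h | h
      · exact Or.inr (fun x hx y hy hxy => neg_le_neg (h hx hy hxy))
      · exact Or.inl (fun x hx y hy hxy => neg_le_neg (h hx hy hxy))
    have key := core_bound a b Λ hab hΛ (fun x => -f x) (fun x => -f' x)
      (fun x hx => (hderiv x hx).neg) hmono' hpos'
    have hconj : (∫ x in a..b, Complex.exp (2 * Real.pi * Complex.I * ((-f x : ℝ) : ℂ))) =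
        (starRingEnd ℂ) (∫ x in a..b, Complex.exp (2 * Real.pi * Complex.I * (f x))) := by
      rw [intervalIntegral.integral_of_le hab.le, intervalIntegral.integral_of_le hab.le,
        ← integral_conj]
      refine integral_congr_ae (Filter.Eventually.of_forall (fun x => ?_))
      show Complex.exp (2 * Real.pi * Complex.I * ((-f x : ℝ) : ℂ)) =
        (starRingEnd ℂ) (Complex.exp (2 * Real.pi * Complex.I * ((f x : ℝ) : ℂ)))
      rw [← Complex.exp_conj]
      congr 1
      simp only [map_mul, Complex.conj_I, Complex.conj_ofReal, Complex.ofReal_neg, map_ofNat]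
      ring
    rw [hconj, RCLike.norm_conj] at key
    exact key
  · apply core_bound a b Λ hab hΛ f f' hderiv hmono
    intro x hx
    have := hbound x hx
    rwa [abs_of_pos (hpos x hx)] at this
end

section
/- Splitting of an integral into short pieces with an enlarged range of shifts: Let T > 0, X > 0, and let ξ ∈ [X, 2X]. Let V : ℝ → ℝ be a nonnegative measurable function with V(x) = 1 for every x ∈ [0,1]. Then for every measurable function F : ℝ → [0,∞], ∫_{2T}^{3T} F(t) dt ≤ Σ_{r ∈ ℤ, T/(2X) − 1 ≤ r ≤ 2T/X} ∫_ℝ F(t) · V((t − T − rξ)/ξ) dt. -/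
open MeasureTheory

/-- Splitting of an integral into short pieces with an enlarged range of shifts:
for `T, X > 0`, `ξ ∈ [X, 2X]`, and `V ≥ 0` with `V = 1` on `[0,1]`, every nonnegative
measurable `F` satisfies
`∫_{2T}^{3T} F(t) dt ≤ ∑_{T/(2X) − 1 ≤ r ≤ 2T/X} ∫_ℝ F(t) V((t − T − rξ)/ξ) dt`. -/
theorem split_integral_shifts (T X ξ : ℝ) (hT : 0 < T) (hX : 0 < X)
    (hξ : ξ ∈ Set.Icc X (2 * X))
    (V : ℝ → ℝ) (hVmeas : Measurable V) (hVnonneg : ∀ x, 0 ≤ V x)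
    (hVone : ∀ x ∈ Set.Icc (0 : ℝ) 1, V x = 1)
    (F : ℝ → ENNReal) (hF : Measurable F) :
    ∫⁻ t in Set.Icc (2 * T) (3 * T), F t ≤
      ∑ r ∈ Finset.Icc ⌈T / (2 * X) - 1⌉ ⌊2 * T / X⌋,
        ∫⁻ t : ℝ, F t * ENNReal.ofReal (V ((t - T - (r : ℝ) * ξ) / ξ)) := by
  obtain ⟨hXξ, hξ2X⟩ := hξ
  have hξ0 : 0 < ξ := lt_of_lt_of_le hX hXξ
  set s := Finset.Icc ⌈T / (2 * X) - 1⌉ ⌊2 * T / X⌋ with hs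
  set I : ℤ → Set ℝ := fun r => Set.Icc (T + r * ξ) (T + (r + 1) * ξ) with hI
  have hsub : Set.Icc (2 * T) (3 * T) ⊆ ⋃ r ∈ s, I r := by
    intro t ht
    obtain ⟨ht1, ht2⟩ := ht
    set y := (t - T) / ξ with hy
    have hyξ : y * ξ = t - T := div_mul_cancel₀ _ hξ0.ne'
    have hr1 : ⌊y⌋ ∈ s := by
      rw [hs, Finset.mem_Icc]
      constructor
      · rw [Int.ceil_le]
        have h1 : T / (2 * X) ≤ y := by
          rw [hy]
          calc T / (2 * X) ≤ T / ξ := by gcongr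
            _ ≤ (t - T) / ξ := by gcongr <;> linarith
        linarith [Int.sub_one_lt_floor y]
      · apply Int.floor_le_floor
        rw [hy, div_le_div_iff₀ hξ0 hX]
        nlinarith
    have hr2 : t ∈ I ⌊y⌋ := by
      have h1 : (⌊y⌋ : ℝ) * ξ ≤ t - T := by
        rw [← hyξ]
        exact mul_le_mul_of_nonneg_right (Int.floor_le y) hξ0.le
      have h2 : t - T ≤ ((⌊y⌋ : ℝ) + 1) * ξ := by
        rw [← hyξ]
        exact mul_le_mul_of_nonneg_right (Int.lt_floor_add_one y).le hξ0.le
      exact ⟨by linarith, by linarith⟩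
    exact Set.mem_biUnion hr1 hr2
  calc ∫⁻ t in Set.Icc (2 * T) (3 * T), F t
      ≤ ∫⁻ t in ⋃ r ∈ s, I r, F t := lintegral_mono_set hsub
    _ = ∫⁻ t in ⋃ r : s, I r, F t := by
        have : (⋃ r ∈ s, I r) = ⋃ r : s, I r := by
          ext x
          constructor
          · intro hx
            obtain ⟨r, hr, hxr⟩ := Set.mem_iUnion₂.mp hx
            exact Set.mem_iUnion.mpr ⟨⟨r, hr⟩, hxr⟩
          · intro hx
            obtain ⟨⟨r, hr⟩, hxr⟩ := Set.mem_iUnion.mp hx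
            exact Set.mem_iUnion₂.mpr ⟨r, hr, hxr⟩
        rw [this]
    _ ≤ ∑' r : s, ∫⁻ t in I r, F t := lintegral_iUnion_le _ _
    _ = ∑ r ∈ s, ∫⁻ t in I r, F t := by
        rw [tsum_fintype]
        exact Finset.sum_coe_sort s (fun r => ∫⁻ t in I r, F t)
    _ ≤ ∑ r ∈ s, ∫⁻ t : ℝ, F t * ENNReal.ofReal (V ((t - T - (r : ℝ) * ξ) / ξ)) := by
        refine Finset.sum_le_sum fun r _ => ?_
        have heq : ∫⁻ t in I r, F t
            = ∫⁻ t in I r, F t * ENNReal.ofReal (V ((t - T - (r : ℝ) * ξ) / ξ)) := by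
          refine setLIntegral_congr_fun measurableSet_Icc ?_
          intro t ht
          beta_reduce
          have h01 : (t - T - (r : ℝ) * ξ) / ξ ∈ Set.Icc (0 : ℝ) 1 := by
            obtain ⟨h1, h2⟩ := ht
            constructor
            · apply div_nonneg (by linarith) hξ0.le
            · rw [div_le_one hξ0]; linarith
          rw [hVone _ h01, ENNReal.ofReal_one, mul_one]
        rw [heq]
        exact setLIntegral_le_lintegral _ _
end
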